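/- With f(p) = (P_C + p)·r'(p) − r(p) and r(p) = c·log₂(1 + g·p/(σ² + I)), f(p) tends to −∞ as p → ∞. -/

import Mathlib

theorem stmt_7 (c g σ2 I P_C : ℝ) (hc : 0 < c) (hg : 0 < g) (hσ : 0 < σ2) (hI : 0 ≤ I)
    (hPC : 0 < P_C)
    (r : ℝ → ℝ) (hr : ∀ p, r p = c * Real.logb 2 (1 + g * p / (σ2 + I)))
    (f : ℝ → ℝ) (hf : ∀ p, f p = (P_C + p) * deriv r p - r p) :
    Filter.Tendsto f Filter.atTop Filter.atBot := by
  set S := σ2 + I with hSdef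
  have hS : 0 < S := by positivity
  have hlog2 : 0 < Real.log 2 := Real.log_pos (by norm_num)
  have hrfun : r = fun p => c * (Real.log (1 + g * p / S) / Real.log 2) := by
    funext p; rw [hr]; simp [Real.logb]
  have hderiv : ∀ p : ℝ, 0 < p →
      deriv r p = c * (g / S / (1 + g * p / S)) / Real.log 2 := by
    intro p hp
    have hx : 0 < 1 + g * p / S := by positivity
    have h1 : HasDerivAt (fun p : ℝ => 1 + g * p / S) (g / S) p := by
      simpa [mul_comm] using (((hasDerivAt_id p).const_mul g).div_const S).const_add 1
    have h2 : HasDerivAt (fun p : ℝ => Real.log (1 + g * p / S))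
        (g / S / (1 + g * p / S)) p := by
      have := (Real.hasDerivAt_log hx.ne').comp p h1
      simpa [div_eq_mul_inv, mul_comm, Function.comp_def] using this
    have h3 : HasDerivAt r (c * (g / S / (1 + g * p / S)) / Real.log 2) p := by
      rw [hrfun]
      simpa [mul_div_assoc] using (h2.div_const (Real.log 2)).const_mul c
    exact h3.deriv
  -- the explicit form of f for p > 0
  have hfeq : ∀ᶠ p in Filter.atTop, f p =
      c / Real.log 2 * (1 + (g * P_C - S) / (S + g * p))
        - c * Real.logb 2 (1 + g * p / S) := by
    filter_upwards [Filter.eventually_gt_atTop 0] with p hp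
    have hx : 0 < 1 + g * p / S := by positivity
    have hSg : 0 < S + g * p := by positivity
    rw [hf, hderiv p hp, hr]
    have : (P_C + p) * (c * (g / S / (1 + g * p / S)) / Real.log 2)
        = c / Real.log 2 * (1 + (g * P_C - S) / (S + g * p)) := by
      field_simp
      ring
    rw [this]
  have hA : Filter.Tendsto
      (fun p => c / Real.log 2 * (1 + (g * P_C - S) / (S + g * p)))
      Filter.atTop (nhds (c / Real.log 2 * (1 + 0))) := by
    apply Filter.Tendsto.const_mul
    apply Filter.Tendsto.const_add
    apply Filter.Tendsto.div_atTop tendsto_const_nhds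
    exact Filter.tendsto_atTop_add_const_left _ S
      (Filter.Tendsto.const_mul_atTop hg Filter.tendsto_id)
  have hB : Filter.Tendsto (fun p => c * Real.logb 2 (1 + g * p / S))
      Filter.atTop Filter.atTop := by
    apply Filter.Tendsto.const_mul_atTop hc
    apply (Real.tendsto_logb_atTop (by norm_num : (1:ℝ) < 2)).comp
    apply Filter.tendsto_atTop_add_const_left
    exact Filter.Tendsto.atTop_div_const hS
      (Filter.Tendsto.const_mul_atTop hg Filter.tendsto_id)
  have := hA.add_atBot (Filter.tendsto_neg_atTop_atBot.comp hB)
  refine (Filter.Tendsto.congr' ?_ this)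
  filter_upwards [hfeq] with p hp
  simp [Function.comp, sub_eq_add_neg] at hp ⊢
  linarith [hp]
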